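/- arXiv:2505.24112 — 5 statements merged into one kernel-verified Lean document; each statement's English description precedes it below -/
import Mathlib

section
/- The pseudogradient matrix 𝒬 of the N-player oligopoly has all eigenvalues with strictly positive real part; in particular 𝒬 is invertible. -/
/-- the pseudogradient matrix `𝒬` of the oligopoly has all (complex)
eigenvalues with strictly positive real part; in particular it is invertible. -/
theorem stmt_5 (N : ℕ) (hN : 2 ≤ N) (R : Fin N → ℝ) (hR : ∀ k, 0 < R k)
    (Rpar : ℝ) (hRpar : Rpar⁻¹ = ∑ k, (R k)⁻¹)
    (Rbar : Fin N → ℝ)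
    (hRbar : ∀ i, (Rbar i)⁻¹ = ∑ k ∈ Finset.univ.erase i, (R k)⁻¹)
    (Q : Matrix (Fin N) (Fin N) ℝ)
    (hQ : ∀ i j, Q i j =
      if j = i then 2 * Rpar / (R i * Rbar i) else -Rpar / (R i * R j)) :
    (∀ μ ∈ spectrum ℂ (Q.map Complex.ofReal), 0 < μ.re) ∧ IsUnit Q.det := by
  have hNpos : 0 < N := by omega
  haveI : Nonempty (Fin N) := ⟨⟨0, hNpos⟩⟩
  have hRpar_pos : 0 < Rpar := by
    have h1 : 0 < Rpar⁻¹ := by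
      rw [hRpar]
      exact Finset.sum_pos (fun k _ => inv_pos.mpr (hR k)) Finset.univ_nonempty
    exact inv_pos.mp h1
  have hRbar_pos : ∀ i, 0 < Rbar i := by
    intro i
    haveI : Nontrivial (Fin N) := Fin.nontrivial_iff_two_le.mpr hN
    have hne : (Finset.univ.erase i).Nonempty := by
      obtain ⟨j, hj⟩ := exists_ne i
      exact ⟨j, Finset.mem_erase.mpr ⟨hj, Finset.mem_univ j⟩⟩
    have h1 : 0 < (Rbar i)⁻¹ := by
      rw [hRbar i]
      exact Finset.sum_pos (fun k _ => inv_pos.mpr (hR k)) hne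
    exact inv_pos.mp h1
  -- row sums of off-diagonal absolute values
  have hrow : ∀ k, ∑ j ∈ Finset.univ.erase k, |Q k j| = Rpar / (R k * Rbar k) := by
    intro k
    have : ∀ j ∈ Finset.univ.erase k, |Q k j| = Rpar / R k * (R j)⁻¹ := by
      intro j hj
      have hjk : j ≠ k := (Finset.mem_erase.mp hj).1
      rw [hQ k j, if_neg hjk, abs_div, abs_neg, abs_of_pos hRpar_pos,
        abs_of_pos (mul_pos (hR k) (hR j)), div_mul_eq_div_div, div_eq_mul_inv]
    rw [Finset.sum_congr rfl this, ← Finset.mul_sum, ← hRbar k, div_mul_eq_div_div,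
      div_eq_mul_inv]
    ring
  have hdiag : ∀ k, Q k k = 2 * Rpar / (R k * Rbar k) := fun k => by
    rw [hQ k k, if_pos rfl]
  have hdom : ∀ k, ∑ j ∈ Finset.univ.erase k, |Q k j| < Q k k := by
    intro k
    rw [hrow k, hdiag k]
    have hpos : 0 < Rpar / (R k * Rbar k) := div_pos hRpar_pos (mul_pos (hR k) (hRbar_pos k))
    calc Rpar / (R k * Rbar k) < 2 * (Rpar / (R k * Rbar k)) := by linarith
    _ = 2 * Rpar / (R k * Rbar k) := by ring
  constructor
  · intro μ hμ
    have hev0 : Module.End.HasEigenvalue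
        (Matrix.toLinAlgEquiv' (Q.map Complex.ofReal) : Module.End ℂ (Fin N → ℂ)) μ := by
      rw [Module.End.hasEigenvalue_iff_mem_spectrum,
        AlgEquiv.spectrum_eq Matrix.toLinAlgEquiv']
      exact hμ
    have heq : (Matrix.toLinAlgEquiv' (Q.map Complex.ofReal) : Module.End ℂ (Fin N → ℂ)) =
        Matrix.toLin' (Q.map Complex.ofReal) := by
      ext v; simp [Matrix.toLinAlgEquiv'_apply]
    have hev : Module.End.HasEigenvalue (Matrix.toLin' (Q.map Complex.ofReal)) μ := heq ▸ hev0
    obtain ⟨k, hk⟩ := eigenvalue_mem_ball hev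
    rw [Metric.mem_closedBall, dist_eq_norm] at hk
    have hre : |μ.re - Q k k| ≤ ‖μ - (Q.map Complex.ofReal) k k‖ := by
      have : μ.re - Q k k = (μ - (Q.map Complex.ofReal) k k).re := by
        simp [Matrix.map_apply]
      rw [this]
      exact Complex.abs_re_le_norm _
    have hsum : ∑ j ∈ Finset.univ.erase k, ‖(Q.map Complex.ofReal) k j‖ =
        ∑ j ∈ Finset.univ.erase k, |Q k j| := by
      apply Finset.sum_congr rfl
      intro j _
      simp [Matrix.map_apply]
    have h1 : |μ.re - Q k k| < Q k k := lt_of_le_of_lt (hre.trans (hk.trans_eq hsum)) (hdom k)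
    have := abs_lt.mp h1
    linarith [this.1]
  · rw [isUnit_iff_ne_zero]
    refine det_ne_zero_of_sum_row_lt_diag (fun k => ?_)
    have h0 : 0 < Q k k := lt_of_le_of_lt (Finset.sum_nonneg fun j _ => abs_nonneg _) (hdom k)
    simpa [Real.norm_eq_abs, abs_of_pos h0] using hdom k
end

section
/- Let 𝒬̄(δ) be the deception-perturbed pseudogradient matrix, with rows [𝒬̄(δ)]_{i:} = [𝒬]_{i:} + Σ_{k∈𝒦_i} δ_k [Q_i]_{k:}. If the deception vector δ satisfies |δ| < 1 (Euclidean norm), then for every diagonal gain matrix K = diag(k_1,...,k_N) with all k_i > 0, the matrix -K𝒬̄(δ) is Hurwitz (all eigenvalues have strictly negative real part). -/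
/-- if the deception vector `δ` (supported on the set `D` of deceptive
players) has Euclidean norm `< 1`, then for every diagonal gain matrix
`K = diag(k_1,...,k_N)` with positive entries, `-K 𝒬̄(δ)` is Hurwitz, where
`[𝒬̄(δ)]_{i:} = [𝒬]_{i:} + ∑_{k ∈ 𝒦_i} δ_k [Q_i]_{k:}` and `𝒦_i` is the set of players
deceptive toward player `i`. -/
theorem stmt_6 (N : ℕ) (hN : 2 ≤ N) (R : Fin N → ℝ) (hR : ∀ k, 0 < R k)
    (Rpar : ℝ) (hRpar : Rpar⁻¹ = ∑ k, (R k)⁻¹)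
    (Rbar : Fin N → ℝ)
    (hRbar : ∀ i, (Rbar i)⁻¹ = ∑ k ∈ Finset.univ.erase i, (R k)⁻¹)
    (Qmat : Fin N → Matrix (Fin N) (Fin N) ℝ)
    (hQmat : ∀ i j k, Qmat i j k =
      if j = i ∧ k = i then 2 * Rpar / (R i * Rbar i)
      else if j ≠ k ∧ (j = i ∨ k = i) then -Rpar / (R j * R k)
      else 0)
    (D : Finset (Fin N)) (Kd : Fin N → Finset (Fin N))
    (hKd : ∀ i, Kd i ⊆ Finset.univ.erase i)
    (hKdD : ∀ i k, k ∈ Kd i → k ∈ D)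
    (δ : Fin N → ℝ) (hδsupp : ∀ k, k ∉ D → δ k = 0)
    (hδ : Real.sqrt (∑ k, δ k ^ 2) < 1)
    (Qbar : Matrix (Fin N) (Fin N) ℝ)
    (hQbar : ∀ i j, Qbar i j = Qmat i i j + ∑ k ∈ Kd i, δ k * Qmat i k j)
    (kg : Fin N → ℝ) (hkg : ∀ i, 0 < kg i) :
    ∀ μ ∈ spectrum ℂ ((-(Matrix.diagonal kg * Qbar)).map Complex.ofReal), μ.re < 0 := by
  have hRinv : ∀ k : Fin N, (0:ℝ) < (R k)⁻¹ := fun k => inv_pos.mpr (hR k)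
  have hNe : ∀ i : Fin N, (Finset.univ.erase i).Nonempty := by
    intro i
    have h1 : 1 ≤ (Finset.univ.erase i).card := by
      rw [Finset.card_erase_of_mem (Finset.mem_univ i), Finset.card_univ, Fintype.card_fin]
      omega
    exact Finset.card_pos.mp (by omega)
  have hRbarpos : ∀ i, 0 < Rbar i := by
    intro i
    have h1 : 0 < (Rbar i)⁻¹ := by
      rw [hRbar i]; exact Finset.sum_pos (fun k _ => hRinv k) (hNe i)
    exact inv_pos.mp h1
  have hRparpos : 0 < Rpar := by
    have h1 : 0 < Rpar⁻¹ := by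
      rw [hRpar]
      exact Finset.sum_pos (fun k _ => hRinv k)
        ⟨⟨0, by omega⟩, Finset.mem_univ _⟩
    exact inv_pos.mp h1
  have habs : ∀ k, |δ k| < 1 := by
    intro k
    have h1 : δ k ^ 2 ≤ ∑ j, δ j ^ 2 :=
      Finset.single_le_sum (fun j _ => sq_nonneg (δ j)) (Finset.mem_univ k)
    calc |δ k| = Real.sqrt (δ k ^ 2) := (Real.sqrt_sq_eq_abs _).symm
      _ ≤ Real.sqrt (∑ j, δ j ^ 2) := Real.sqrt_le_sqrt h1
      _ < 1 := hδ
  -- off-diagonal entries of Qbar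
  have hoff : ∀ i j : Fin N, j ≠ i → Qbar i j = -(Rpar * ((R i)⁻¹ * (R j)⁻¹)) := by
    intro i j hij
    rw [hQbar]
    have h1 : Qmat i i j = -Rpar / (R i * R j) := by
      rw [hQmat]
      rw [if_neg (by simp [hij]), if_pos ⟨Ne.symm hij, Or.inl rfl⟩]
    have h2 : ∀ k ∈ Kd i, δ k * Qmat i k j = 0 := by
      intro k hk
      have hki : k ≠ i := (Finset.mem_erase.mp (hKd i hk)).1
      have : Qmat i k j = 0 := by
        rw [hQmat]
        rw [if_neg (by simp [hki]), if_neg (by simp [hki, hij])]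
      rw [this, mul_zero]
    rw [Finset.sum_eq_zero h2, h1, add_zero, div_eq_mul_inv, mul_inv, neg_mul]
  -- diagonal entries of Qbar
  have hdiag : ∀ i : Fin N, Qbar i i =
      2 * (Rpar * ((R i)⁻¹ * (Rbar i)⁻¹))
        - Rpar * (R i)⁻¹ * ∑ k ∈ Kd i, δ k * (R k)⁻¹ := by
    intro i
    rw [hQbar]
    have h1 : Qmat i i i = 2 * Rpar / (R i * Rbar i) := by
      rw [hQmat]; rw [if_pos ⟨rfl, rfl⟩]
    have h2 : ∀ k ∈ Kd i, δ k * Qmat i k i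
        = -(Rpar * (R i)⁻¹) * (δ k * (R k)⁻¹) := by
      intro k hk
      have hki : k ≠ i := (Finset.mem_erase.mp (hKd i hk)).1
      have : Qmat i k i = -Rpar / (R k * R i) := by
        rw [hQmat]
        rw [if_neg (by simp [hki]), if_pos ⟨hki, Or.inr rfl⟩]
      rw [this]
      field_simp
    rw [Finset.sum_congr rfl h2, h1, ← Finset.mul_sum]
    field_simp
    ring
  -- strict diagonal dominance
  have key : ∀ i : Fin N, ∑ j ∈ Finset.univ.erase i, |Qbar i j| < Qbar i i := by
    intro i
    have hsumoff : ∑ j ∈ Finset.univ.erase i, |Qbar i j|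
        = Rpar * (R i)⁻¹ * (Rbar i)⁻¹ := by
      rw [hRbar i, Finset.mul_sum]
      refine Finset.sum_congr rfl fun j hj => ?_
      have hji : j ≠ i := (Finset.mem_erase.mp hj).1
      rw [hoff i j hji, abs_neg,
        abs_of_pos (mul_pos hRparpos (mul_pos (hRinv i) (hRinv j))), mul_assoc]
    have hS : ∑ k ∈ Kd i, δ k * (R k)⁻¹ < (Rbar i)⁻¹ := by
      have s1 : ∑ k ∈ Kd i, δ k * (R k)⁻¹ ≤ ∑ k ∈ Kd i, |δ k| * (R k)⁻¹ :=
        Finset.sum_le_sum fun k _ =>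
          mul_le_mul_of_nonneg_right (le_abs_self _) (le_of_lt (hRinv k))
      have s2 : ∑ k ∈ Kd i, |δ k| * (R k)⁻¹
          ≤ ∑ k ∈ Finset.univ.erase i, |δ k| * (R k)⁻¹ :=
        Finset.sum_le_sum_of_subset_of_nonneg (hKd i)
          (fun k _ _ => mul_nonneg (abs_nonneg _) (le_of_lt (hRinv k)))
      have s3 : ∑ k ∈ Finset.univ.erase i, |δ k| * (R k)⁻¹
          < ∑ k ∈ Finset.univ.erase i, (R k)⁻¹ := by
        refine Finset.sum_lt_sum_of_nonempty (hNe i) fun k _ => ?_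
        have := habs k
        nlinarith [hRinv k]
      rw [hRbar i]
      exact lt_of_le_of_lt (le_trans s1 s2) s3
    rw [hsumoff, hdiag i]
    have hc : 0 < Rpar * (R i)⁻¹ := mul_pos hRparpos (hRinv i)
    nlinarith [mul_lt_mul_of_pos_left hS hc]
  -- Gershgorin
  intro μ hμ
  set A : Matrix (Fin N) (Fin N) ℂ := (-(Matrix.diagonal kg * Qbar)).map Complex.ofReal with hA
  have hAentry : ∀ i j, A i j = Complex.ofReal (-(kg i * Qbar i j)) := by
    intro i j
    simp [hA, Matrix.map_apply, Matrix.diagonal_mul]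
  have heig : Module.End.HasEigenvalue (Matrix.toLin' A) μ := by
    apply Module.End.HasEigenvalue.of_mem_spectrum
    rwa [show (Matrix.toLin' A : Module.End ℂ (Fin N → ℂ)) = Matrix.toLinAlgEquiv' A from rfl,
      AlgEquiv.spectrum_eq Matrix.toLinAlgEquiv' A]
  obtain ⟨i, hball⟩ := eigenvalue_mem_ball heig
  rw [Metric.mem_closedBall, dist_eq_norm] at hball
  have hre : μ.re - (A i i).re ≤ ‖μ - A i i‖ := by
    have := Complex.abs_re_le_norm (μ - A i i)
    have h2 : (μ - A i i).re = μ.re - (A i i).re := by simp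
    calc μ.re - (A i i).re = (μ - A i i).re := h2.symm
      _ ≤ |(μ - A i i).re| := le_abs_self _
      _ ≤ ‖μ - A i i‖ := this
      _ = ‖μ - A i i‖ := rfl
  have hAii : (A i i).re = -(kg i * Qbar i i) := by rw [hAentry]; simp
  have hsumnorm : ∑ j ∈ Finset.univ.erase i, ‖A i j‖
      = kg i * ∑ j ∈ Finset.univ.erase i, |Qbar i j| := by
    rw [Finset.mul_sum]
    refine Finset.sum_congr rfl fun j _ => ?_
    rw [hAentry]
    rw [Complex.norm_real, Real.norm_eq_abs, abs_neg, abs_mul,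
      abs_of_pos (hkg i)]
  have hfin : μ.re ≤ -(kg i * Qbar i i) + kg i * ∑ j ∈ Finset.univ.erase i, |Qbar i j| := by
    have := le_trans hre hball
    rw [hAii] at this
    rw [hsumnorm] at hball
    linarith [le_trans hre hball, hAii ▸ hre]
  have := key i
  nlinarith [hkg i, key i]
end

section
/- If 0 < |δ| < 2 and 𝒬̄(δ) is invertible, then the point u* = -𝒬̄(δ)^{-1} 𝒬̄ℬ(δ) is a Nash equilibrium of the deceptive game {J̃_i}: each J̃_i is quadratic in x_i with ∇_i J̃_i(u*) = 0 and second derivative ∂²J̃_i/∂x_i² = [𝒬̄(δ)]_{ii} > 0, so x_i ↦ J̃_i(x_i, u*_{-i}) is minimized at u*_i. -/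
/-- if `0 < |δ| < 2` and `𝒬̄(δ)` is invertible, then
`u* = -𝒬̄(δ)⁻¹ ℬ̄(δ)` is a Nash equilibrium of the deceptive game `{J̃_i}`: each
diagonal entry `[𝒬̄(δ)]_{ii}` is positive and `x_i ↦ J̃_i(x_i, u*_{-i})` is minimized at
`u*_i`. -/
theorem stmt_9 (N : ℕ) (hN : 2 ≤ N) (R : Fin N → ℝ) (hR : ∀ k, 0 < R k)
    (Rpar : ℝ) (hRpar : Rpar⁻¹ = ∑ k, (R k)⁻¹)
    (Rbar : Fin N → ℝ)
    (hRbar : ∀ i, (Rbar i)⁻¹ = ∑ k ∈ Finset.univ.erase i, (R k)⁻¹)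
    (Sd : ℝ) (m : Fin N → ℝ)
    (J : Fin N → (Fin N → ℝ) → ℝ)
    (hJ : ∀ i x, J i x =
      -((Rpar / R i) * (Sd - x i / Rbar i + ∑ j ∈ Finset.univ.erase i, x j / R j))
        * (x i - m i))
    (D : Finset (Fin N)) (Kd : Fin N → Finset (Fin N))
    (hKd : ∀ i, Kd i ⊆ Finset.univ.erase i)
    (hKdD : ∀ i k, k ∈ Kd i → k ∈ D)
    (δ : Fin N → ℝ) (hδsupp : ∀ k, k ∉ D → δ k = 0)
    (hδpos : 0 < Real.sqrt (∑ k, δ k ^ 2))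
    (hδlt : Real.sqrt (∑ k, δ k ^ 2) < 2)
    -- deceptive costs: `J̃_i(x) = J_i(x) + σ_i(x_{-i}) + ∑_{k∈𝒦_i} δ_k ∫_0^{x_i} ∇_k J_i`
    (σ : Fin N → (Fin N → ℝ) → ℝ)
    (hσ : ∀ i x y, (∀ j, j ≠ i → x j = y j) → σ i x = σ i y)
    (Jt : Fin N → (Fin N → ℝ) → ℝ)
    (hJt : ∀ i x, Jt i x = J i x + σ i x
      + ∑ k ∈ Kd i, δ k * (-(Rpar / (2 * R i * R k)) * x i * (x i - 2 * m i)))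
    -- perturbed pseudogradient
    (Qbar : Matrix (Fin N) (Fin N) ℝ)
    (hQbar : ∀ i j, Qbar i j =
      (if j = i then 2 * Rpar / (R i * Rbar i) else -Rpar / (R i * R j))
        + ∑ k ∈ Kd i, δ k * (if j = i then -Rpar / (R i * R k) else 0))
    (Bbar : Fin N → ℝ)
    (hBbar : ∀ i, Bbar i = (-(m i) * Rpar / (R i * Rbar i) - Sd * Rpar / R i)
      + ∑ k ∈ Kd i, δ k * (m i * Rpar / (R i * R k)))
    (hinv : IsUnit Qbar.det) :
    (∀ i, 0 < Qbar i i) ∧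
    (∀ i t, Jt i (-(Qbar⁻¹.mulVec Bbar))
      ≤ Jt i (Function.update (-(Qbar⁻¹.mulVec Bbar)) i t)) := by

  have hN0 : 0 < N := by omega
  have hRparpos : 0 < Rpar := by
    rw [← inv_pos, hRpar]
    exact Finset.sum_pos (fun k _ => inv_pos.2 (hR k)) ⟨⟨0, hN0⟩, Finset.mem_univ _⟩
  have herase : ∀ i : Fin N, (Finset.univ.erase i).Nonempty := by
    intro i
    rw [← Finset.card_pos, Finset.card_erase_of_mem (Finset.mem_univ i), Finset.card_univ,
      Fintype.card_fin]
    omega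
  have hSE : ∀ i : Fin N, 0 < ∑ k ∈ Finset.univ.erase i, (R k)⁻¹ := fun i =>
    Finset.sum_pos (fun k _ => inv_pos.2 (hR k)) (herase i)
  have hδle : ∀ k, δ k ≤ Real.sqrt (∑ j, δ j ^ 2) := by
    intro k
    refine le_trans (le_abs_self _) ?_
    rw [← Real.sqrt_sq_eq_abs]
    exact Real.sqrt_le_sqrt (Finset.single_le_sum (fun j _ => sq_nonneg (δ j)) (Finset.mem_univ k))
  have hQii : ∀ i, Qbar i i = 2 * Rpar / (R i * Rbar i)
      - (Rpar / R i) * ∑ k ∈ Kd i, δ k * (R k)⁻¹ := by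
    intro i
    rw [hQbar i i, if_pos rfl, Finset.mul_sum]
    rw [show ∑ k ∈ Kd i, δ k * (if (i : Fin N) = i then -Rpar / (R i * R k) else 0)
        = ∑ k ∈ Kd i, -(Rpar / R i * (δ k * (R k)⁻¹)) from
      Finset.sum_congr rfl fun k _ => by rw [if_pos rfl]; field_simp]
    rw [Finset.sum_neg_distrib]
    ring
  have hpos : ∀ i, 0 < Qbar i i := by
    intro i
    have key : ∑ k ∈ Kd i, δ k * (R k)⁻¹ < 2 * ∑ k ∈ Finset.univ.erase i, (R k)⁻¹ := by
      calc ∑ k ∈ Kd i, δ k * (R k)⁻¹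
          ≤ ∑ k ∈ Kd i, Real.sqrt (∑ j, δ j ^ 2) * (R k)⁻¹ :=
            Finset.sum_le_sum fun k _ =>
              mul_le_mul_of_nonneg_right (hδle k) (inv_nonneg.2 (hR k).le)
        _ = Real.sqrt (∑ j, δ j ^ 2) * ∑ k ∈ Kd i, (R k)⁻¹ := (Finset.mul_sum _ _ _).symm
        _ ≤ Real.sqrt (∑ j, δ j ^ 2) * ∑ k ∈ Finset.univ.erase i, (R k)⁻¹ :=
            mul_le_mul_of_nonneg_left
              (Finset.sum_le_sum_of_subset_of_nonneg (hKd i)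
                (fun k _ _ => inv_nonneg.2 (hR k).le)) (Real.sqrt_nonneg _)
        _ < 2 * ∑ k ∈ Finset.univ.erase i, (R k)⁻¹ := mul_lt_mul_of_pos_right hδlt (hSE i)
    have h2 : 2 * Rpar / (R i * Rbar i)
        = (Rpar / R i) * (2 * ∑ k ∈ Finset.univ.erase i, (R k)⁻¹) := by
      rw [← hRbar i]
      field_simp
    rw [hQii i, h2, ← mul_sub]
    exact mul_pos (div_pos hRparpos (hR i)) (by linarith)
  refine ⟨hpos, ?_⟩
  intro i t
  set u : Fin N → ℝ := -(Qbar⁻¹.mulVec Bbar) with hu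
  have hrow : ∑ j, Qbar i j * u j = -Bbar i := by
    have h1 : Qbar.mulVec (Qbar⁻¹.mulVec Bbar) = Bbar := by
      rw [Matrix.mulVec_mulVec, Matrix.mul_nonsing_inv _ hinv, Matrix.one_mulVec]
    have h2 : Qbar.mulVec u = -Bbar := by
      rw [hu, Matrix.mulVec_neg, h1]
    have := congrFun h2 i
    simpa [Matrix.mulVec, dotProduct] using this
  have hrow2 : Qbar i i * u i
      + (-(Rpar / R i)) * ∑ j ∈ Finset.univ.erase i, u j / R j = -Bbar i := by
    rw [← hrow, ← Finset.sum_erase_add Finset.univ _ (Finset.mem_univ i)]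
    have hoff : ∑ j ∈ Finset.univ.erase i, Qbar i j * u j
        = (-(Rpar / R i)) * ∑ j ∈ Finset.univ.erase i, u j / R j := by
      rw [Finset.mul_sum]
      refine Finset.sum_congr rfl fun j hj => ?_
      have hji : j ≠ i := Finset.ne_of_mem_erase hj
      rw [hQbar i j, if_neg hji]
      simp only [if_neg hji, mul_zero, Finset.sum_const_zero, add_zero]
      field_simp
    rw [hoff]; ring
  have hBi : Bbar i = (-(m i) * Rpar / (R i * Rbar i) - Sd * Rpar / R i)
      + (m i * Rpar / R i) * ∑ k ∈ Kd i, δ k * (R k)⁻¹ := by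
    rw [hBbar i, Finset.mul_sum]
    congr 1
    exact Finset.sum_congr rfl fun k _ => by field_simp
  have hσeq : σ i (Function.update u i t) = σ i u :=
    hσ i _ _ fun j hj => Function.update_of_ne hj _ _
  have hKsum : ∀ r : ℝ, ∑ k ∈ Kd i, δ k * (-(Rpar / (2 * R i * R k)) * r * (r - 2 * m i))
      = (-(Rpar / (2 * R i)) * r * (r - 2 * m i)) * ∑ k ∈ Kd i, δ k * (R k)⁻¹ := by
    intro r
    rw [Finset.mul_sum]
    refine Finset.sum_congr rfl fun k _ => ?_
    field_simp
  have hmain : Jt i (Function.update u i t) - Jt i u = (Qbar i i / 2) * (t - u i) ^ 2 := by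
    rw [hJt, hJt, hJ, hJ, hσeq, Function.update_self]
    rw [show ∑ j ∈ Finset.univ.erase i, Function.update u i t j / R j
        = ∑ j ∈ Finset.univ.erase i, u j / R j from
      Finset.sum_congr rfl fun j hj => by
        rw [Function.update_of_ne (Finset.ne_of_mem_erase hj)]]
    rw [hKsum t, hKsum (u i), hQii i]
    have h := hrow2
    rw [hQii i, hBi] at h
    linear_combination (t - u i) * h
  have hq := hpos i
  have h2 : 0 ≤ (Qbar i i / 2) * (t - u i) ^ 2 := mul_nonneg (by linarith) (sq_nonneg _)
  linarith [hmain]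
end

section
/- With σ_i(x_{-i}) := -(R_∥ m_i² / (2R_i)) Σ_{k∈𝒦_i} δ_k/R_k, the deceptive cost satisfies the factorization J̃_i(x) = -( s_i(x) + (x_i - m_i)(R_∥/(2R_i)) Σ_{k∈𝒦_i} δ_k/R_k )(x_i - m_i); i.e. deception is equivalent to an inflated/deflated sales function. -/
/-- with `σ_i(x_{-i}) := -(R∥ m_i²/(2R_i)) ∑_{k∈𝒦_i} δ_k/R_k`, the
deceptive cost factorizes as
`J̃_i(x) = -( s_i(x) + (x_i - m_i)(R∥/(2R_i)) ∑_{k∈𝒦_i} δ_k/R_k )(x_i - m_i)`,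
i.e. deception is equivalent to an inflated/deflated sales function. -/
theorem stmt_11 (N : ℕ) (hN : 2 ≤ N) (R : Fin N → ℝ) (hR : ∀ k, 0 < R k)
    (Rpar : ℝ) (hRpar : Rpar⁻¹ = ∑ k, (R k)⁻¹)
    (Rbar : Fin N → ℝ)
    (hRbar : ∀ i, (Rbar i)⁻¹ = ∑ k ∈ Finset.univ.erase i, (R k)⁻¹)
    (Sd : ℝ) (m : Fin N → ℝ)
    (s : Fin N → (Fin N → ℝ) → ℝ)
    (hs : ∀ i x, s i x =
      (Rpar / R i) * (Sd - x i / Rbar i + ∑ j ∈ Finset.univ.erase i, x j / R j))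
    (J : Fin N → (Fin N → ℝ) → ℝ)
    (hJ : ∀ i x, J i x = -(s i x) * (x i - m i))
    (Kd : Fin N → Finset (Fin N)) (hKd : ∀ i, Kd i ⊆ Finset.univ.erase i)
    (δ : Fin N → ℝ)
    (σ : Fin N → ℝ)
    (hσ : ∀ i, σ i = -(Rpar * m i ^ 2 / (2 * R i)) * ∑ k ∈ Kd i, δ k / R k)
    (Jt : Fin N → (Fin N → ℝ) → ℝ)
    (hJt : ∀ i x, Jt i x = J i x + σ i
      + ∑ k ∈ Kd i, δ k * (-(Rpar / (2 * R i * R k)) * x i * (x i - 2 * m i))) :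
    ∀ i x, Jt i x =
      -(s i x + (x i - m i) * (Rpar / (2 * R i)) * ∑ k ∈ Kd i, δ k / R k)
        * (x i - m i) := by
  intro i x
  have h : ∑ k ∈ Kd i, δ k * (-(Rpar / (2 * R i * R k)) * x i * (x i - 2 * m i))
      = (-(Rpar / (2 * R i)) * x i * (x i - 2 * m i)) * ∑ k ∈ Kd i, δ k / R k := by
    rw [Finset.mul_sum]
    refine Finset.sum_congr rfl fun k _ => ?_
    have hk := (hR k).ne'
    have hi := (hR i).ne'
    field_simp
  rw [hJt, hJ, hσ, h]
  ring
end

section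
/- In the N-player oligopoly with all δ = 0, the unique Nash equilibrium is x* = -𝒬^{-1}ℬ, and it exists (𝒬 is invertible) by strict diagonal dominance of 𝒬. -/
/-- A strictly convex quadratic is minimized at `t₀` iff its derivative vanishes there. -/
theorem quad_min_iff' (a b c t₀ : ℝ) (ha : 0 < a) :
    (∀ t, a*t₀^2 + b*t₀ + c ≤ a*t^2 + b*t + c) ↔ 2*a*t₀ + b = 0 := by
  constructor
  · intro h
    by_contra hd
    have h1 := h (t₀ - (2*a*t₀+b)/(2*a))
    have ha' : a ≠ 0 := ne_of_gt ha
    have key : a*(t₀ - (2*a*t₀+b)/(2*a))^2 + b*(t₀ - (2*a*t₀+b)/(2*a)) + c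
        = a*t₀^2 + b*t₀ + c - (2*a*t₀+b)^2/(4*a) := by
      field_simp
      ring
    rw [key] at h1
    have hpos : 0 < (2*a*t₀+b)^2/(4*a) := by positivity
    linarith
  · intro h t
    have hb : b = -(2*a*t₀) := by linarith
    rw [hb]
    nlinarith [mul_nonneg (le_of_lt ha) (sq_nonneg (t - t₀))]

/-- in the N-player oligopoly without deception (`δ = 0`), the matrix `𝒬`
is invertible and `x* = -𝒬⁻¹ℬ` is the unique Nash equilibrium of the game with costs
`J_i(x) = -s_i(x)(x_i - m_i)`. -/
theorem stmt_17 (N : ℕ) (hN : 2 ≤ N) (R : Fin N → ℝ) (hR : ∀ k, 0 < R k)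
    (Rpar : ℝ) (hRpar : Rpar⁻¹ = ∑ k, (R k)⁻¹)
    (Rbar : Fin N → ℝ)
    (hRbar : ∀ i, (Rbar i)⁻¹ = ∑ k ∈ Finset.univ.erase i, (R k)⁻¹)
    (Sd : ℝ) (m : Fin N → ℝ)
    (J : Fin N → (Fin N → ℝ) → ℝ)
    (hJ : ∀ i x, J i x =
      -((Rpar / R i) * (Sd - x i / Rbar i + ∑ j ∈ Finset.univ.erase i, x j / R j))
        * (x i - m i))
    (Q : Matrix (Fin N) (Fin N) ℝ) (B : Fin N → ℝ)
    (hQ : ∀ i j, Q i j =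
      if j = i then 2 * Rpar / (R i * Rbar i) else -Rpar / (R i * R j))
    (hB : ∀ i, B i = -(m i) * Rpar / (R i * Rbar i) - Sd * Rpar / R i) :
    IsUnit Q.det ∧
    (∀ i t, J i (-(Q⁻¹.mulVec B)) ≤ J i (Function.update (-(Q⁻¹.mulVec B)) i t)) ∧
    (∀ y : Fin N → ℝ,
      (∀ i t, J i y ≤ J i (Function.update y i t)) → y = -(Q⁻¹.mulVec B)) := by
  -- positivity facts
  have huniv : (Finset.univ : Finset (Fin N)).Nonempty := ⟨⟨0, by omega⟩, Finset.mem_univ _⟩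
  have hRpar_pos : 0 < Rpar := by
    have h : 0 < Rpar⁻¹ := by
      rw [hRpar]
      exact Finset.sum_pos (fun k _ => inv_pos.mpr (hR k)) huniv
    exact inv_pos.mp h
  have herase : ∀ i : Fin N, (Finset.univ.erase i).Nonempty := by
    intro i
    rw [← Finset.card_pos, Finset.card_erase_of_mem (Finset.mem_univ i), Finset.card_univ,
      Fintype.card_fin]
    omega
  have hRbar_pos : ∀ i, 0 < Rbar i := by
    intro i
    have h : 0 < (Rbar i)⁻¹ := by
      rw [hRbar]
      exact Finset.sum_pos (fun k _ => inv_pos.mpr (hR k)) (herase i)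
    exact inv_pos.mp h
  -- invertibility via strict diagonal dominance
  have hdet : Q.det ≠ 0 := by
    apply det_ne_zero_of_sum_row_lt_diag
    intro k
    have hX : 0 < Rpar / R k * (Rbar k)⁻¹ := by
      have := hR k; have := hRbar_pos k; positivity
    have h1 : ∑ j ∈ Finset.univ.erase k, ‖Q k j‖ = Rpar / R k * (Rbar k)⁻¹ := by
      rw [hRbar k, Finset.mul_sum]
      apply Finset.sum_congr rfl
      intro j hj
      have hjk : j ≠ k := Finset.ne_of_mem_erase hj
      have hnp : -Rpar / (R k * R j) ≤ 0 := by
        apply div_nonpos_of_nonpos_of_nonneg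
        · linarith
        · exact le_of_lt (mul_pos (hR k) (hR j))
      rw [hQ k j, if_neg hjk, Real.norm_eq_abs, abs_of_nonpos hnp]
      ring
    have h2 : Q k k = 2 * (Rpar / R k * (Rbar k)⁻¹) := by
      rw [hQ k k, if_pos rfl]; ring
    rw [h1, Real.norm_eq_abs, h2, abs_of_pos (by linarith)]
    linarith
  have hQunit : IsUnit Q.det := isUnit_iff_ne_zero.mpr hdet
  -- mulVec formula
  have key : ∀ (y : Fin N → ℝ) (i : Fin N), Q.mulVec y i
      = 2 * Rpar / (R i * Rbar i) * y i
        - Rpar / R i * (∑ j ∈ Finset.univ.erase i, y j / R j) := by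
    intro y i
    rw [Matrix.mulVec, dotProduct,
      ← Finset.sum_erase_add _ _ (Finset.mem_univ i), hQ i i, if_pos rfl]
    have h3 : ∑ j ∈ Finset.univ.erase i, Q i j * y j
        = ∑ j ∈ Finset.univ.erase i, (-(Rpar / R i) * (y j / R j)) := by
      apply Finset.sum_congr rfl
      intro j hj
      rw [hQ i j, if_neg (Finset.ne_of_mem_erase hj)]
      ring
    rw [h3, ← Finset.mul_sum]
    ring
  -- the sum over erased indices ignores the update
  have hSup : ∀ (y : Fin N → ℝ) (i : Fin N) (t : ℝ),
      ∑ j ∈ Finset.univ.erase i, (Function.update y i t) j / R j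
        = ∑ j ∈ Finset.univ.erase i, y j / R j := by
    intro y i t
    apply Finset.sum_congr rfl
    intro j hj
    rw [Function.update_of_ne (Finset.ne_of_mem_erase hj)]
  -- cost under unilateral deviation is an explicit quadratic
  have hJup : ∀ (y : Fin N → ℝ) (i : Fin N) (t : ℝ), J i (Function.update y i t)
      = (Rpar / (R i * Rbar i)) * t^2
        + (-(Rpar / R i) * (Sd + (∑ j ∈ Finset.univ.erase i, y j / R j))
            - Rpar / (R i * Rbar i) * m i) * t
        + (Rpar / R i) * (Sd + (∑ j ∈ Finset.univ.erase i, y j / R j)) * m i := by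
    intro y i t
    rw [hJ, hSup, Function.update_self]
    ring
  -- Nash condition at player i ↔ linear equation
  have hiff : ∀ (y : Fin N → ℝ) (i : Fin N),
      (∀ t, J i y ≤ J i (Function.update y i t)) ↔ Q.mulVec y i + B i = 0 := by
    intro y i
    have ha : 0 < Rpar / (R i * Rbar i) := by
      have := hR i; have := hRbar_pos i; positivity
    have hy : J i y
        = (Rpar / (R i * Rbar i)) * (y i)^2
          + (-(Rpar / R i) * (Sd + (∑ j ∈ Finset.univ.erase i, y j / R j))
              - Rpar / (R i * Rbar i) * m i) * (y i)
          + (Rpar / R i) * (Sd + (∑ j ∈ Finset.univ.erase i, y j / R j)) * m i := by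
      conv_lhs => rw [← Function.update_eq_self i y]
      exact hJup y i (y i)
    have heq : Q.mulVec y i + B i
        = 2 * (Rpar / (R i * Rbar i)) * (y i)
          + (-(Rpar / R i) * (Sd + (∑ j ∈ Finset.univ.erase i, y j / R j))
              - Rpar / (R i * Rbar i) * m i) := by
      rw [key, hB]
      ring
    constructor
    · intro h
      rw [heq]
      apply (quad_min_iff' _ _ _ _ ha).mp
      intro t
      have ht := h t
      rwa [hy, hJup] at ht
    · intro h t
      rw [hy, hJup]
      apply (quad_min_iff' _ _ _ _ ha).mpr
      rw [heq] at h
      exact h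
  -- the candidate solves the linear system
  have hxstar : Q.mulVec (-(Q⁻¹.mulVec B)) = -B := by
    rw [Matrix.mulVec_neg, Matrix.mulVec_mulVec, Matrix.mul_nonsing_inv Q hQunit,
      Matrix.one_mulVec]
  refine ⟨hQunit, ?_, ?_⟩
  · intro i t
    have h := (hiff (-(Q⁻¹.mulVec B)) i).mpr (by rw [hxstar]; simp)
    exact h t
  · intro y hy
    have hlin : Q.mulVec y = -B := by
      funext i
      have h := (hiff y i).mp (hy i)
      simp only [Pi.neg_apply]
      linarith
    have : Q⁻¹.mulVec (Q.mulVec y) = Q⁻¹.mulVec (-B) := by rw [hlin]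
    rwa [Matrix.mulVec_mulVec, Matrix.nonsing_inv_mul Q hQunit, Matrix.one_mulVec,
      Matrix.mulVec_neg] at this
end
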